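/- Let f(x) = (1 − x^α)^{1/α}, 1 < α < 2, and fix c₂(α) > 0. There exist constants c₀(α), c', c'' > 0 such that if 0 < x₀ ≤ ((2−α)/(1+α))^{1/α}/2, t ≥ c₂(α) x₀^α, t ≤ c₀(α), and x̃ > 0 is the point with f(x̃) = f(x₀) − t√(1 + f'(x₀)²), then c' t^{1/α} ≤ x̃ ≤ c'' t^{1/α}. -/

import Mathlib

open Real

private lemma lemA {α u : ℝ} (hα : 1 ≤ α) (hu0 : 0 ≤ u) (hu1 : u ≤ 1) :
    1 - u ≤ (1 - u) ^ (1/α) := by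
  have hα0 : 0 < α := lt_of_lt_of_le one_pos hα
  by_cases hb : 1 - u = 0
  · rw [hb]; exact Real.rpow_nonneg le_rfl _
  · have hb' : 0 < 1 - u := lt_of_le_of_ne (by linarith) (Ne.symm hb)
    have h1 : (1:ℝ)/α ≤ 1 := by rw [div_le_one hα0]; linarith
    have := Real.rpow_le_rpow_of_exponent_ge hb' (by linarith) h1
    simpa using this

private lemma lemB {α u : ℝ} (hα : 1 ≤ α) (hu0 : 0 ≤ u) (hu1 : u ≤ 1) :
    (1 - u) ^ (1/α) ≤ 1 - u/α := by
  have hα0 : 0 < α := lt_of_lt_of_le one_pos hα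
  have h1 : u/α ≤ 1 := by
    rw [div_le_one hα0]; linarith
  have hbern := one_add_mul_self_le_rpow_one_add (s := -(u/α)) (by linarith) hα
  have hm : α * (u/α) = u := by field_simp
  have hb : 1 - u ≤ (1 - u/α) ^ α := by
    have heq : 1 + α * (-(u/α)) = 1 - u := by rw [mul_neg, hm]; ring
    rw [heq] at hbern
    rw [← sub_eq_add_neg] at hbern
    simpa using hbern
  calc (1 - u) ^ (1/α) ≤ ((1 - u/α) ^ α) ^ (1/α) :=
        Real.rpow_le_rpow (by linarith) hb (by positivity)
    _ = 1 - u/α := by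
        rw [← Real.rpow_mul (by linarith), mul_one_div, div_self hα0.ne', Real.rpow_one]

set_option maxHeartbeats 1000000 in
theorem xtilde_bounds (α : ℝ) (hα1 : 1 < α) (hα2 : α < 2)
    (c₂ : ℝ) (hc₂ : 0 < c₂) :
    ∃ c₀ c' c'' : ℝ, 0 < c₀ ∧ 0 < c' ∧ 0 < c'' ∧
      ∀ x₀ t xt : ℝ,
        0 < x₀ → x₀ ≤ ((2 - α) / (1 + α)) ^ (1 / α) / 2 →
        c₂ * x₀ ^ α ≤ t → t ≤ c₀ →
        ∀ f : ℝ → ℝ, ∀ d : ℝ,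
          f = (fun x => (1 - |x| ^ α) ^ (1 / α)) →
          d = -(x₀ ^ (α - 1) * (1 - x₀ ^ α) ^ (1 / α - 1)) →
          0 < xt → f xt = f x₀ - t * Real.sqrt (1 + d ^ 2) →
          c' * t ^ (1 / α) ≤ xt ∧ xt ≤ c'' * t ^ (1 / α) := by
  have hα0 : (0:ℝ) < α := by linarith
  set K : ℝ := α * (1/c₂ + 3) with hK
  have hK0 : 0 < K := by positivity
  refine ⟨1/6, 1, K ^ (1/α), by norm_num, one_pos, Real.rpow_pos_of_pos hK0 _, ?_⟩
  intro x₀ t xt hx₀ hx₀le ht1 ht2 f d hf hd hxt hfeq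
  subst hf hd
  -- basic facts about x₀
  have hfrac : ((2 - α) / (1 + α) : ℝ) ≤ 1 := by
    rw [div_le_one (by linarith)]; linarith
  have hbase1 : ((2 - α) / (1 + α) : ℝ) ^ (1/α) ≤ 1 :=
    Real.rpow_le_one (div_nonneg (by linarith) (by linarith)) hfrac (by positivity)
  have hx₀half : x₀ ≤ 1/2 := le_trans hx₀le (by linarith)
  have hx₀1 : x₀ ≤ 1 := by linarith
  have hx₀αhalf : x₀ ^ α ≤ 1/2 := by
    have h1 : x₀ ^ α ≤ (1/2:ℝ) ^ α := Real.rpow_le_rpow hx₀.le hx₀half hα0.le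
    have h2 : ((1/2:ℝ)) ^ α ≤ ((1/2:ℝ)) ^ (1:ℝ) :=
      Real.rpow_le_rpow_of_exponent_ge (by norm_num) (by norm_num) hα1.le
    rw [Real.rpow_one] at h2; linarith
  have hx₀α0 : 0 < x₀ ^ α := Real.rpow_pos_of_pos hx₀ _
  have ht0 : 0 < t := lt_of_lt_of_le (by positivity) ht1
  have hx₀αt : x₀ ^ α ≤ t / c₂ := by
    rw [le_div_iff₀ hc₂]; linarith [ht1]
  -- bound on d
  have ha1 : x₀ ^ (α - 1) ≤ 1 := Real.rpow_le_one hx₀.le hx₀1 (by linarith)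
  have ha0 : 0 ≤ x₀ ^ (α - 1) := Real.rpow_nonneg hx₀.le _
  have hblo : (1/2:ℝ) ≤ 1 - x₀ ^ α := by linarith
  have hb2 : (1 - x₀ ^ α) ^ (1/α - 1) ≤ 2 := by
    have e1 : (1 - x₀ ^ α) ^ (1/α - 1) ≤ (1/2:ℝ) ^ (1/α - 1) :=
      Real.rpow_le_rpow_of_nonpos (by norm_num) hblo
        (by rw [sub_nonpos, div_le_one hα0]; linarith)
    have e2 : ((1/2:ℝ)) ^ (1/α - 1) ≤ ((1/2:ℝ)) ^ (-1:ℝ) :=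
      Real.rpow_le_rpow_of_exponent_ge (by norm_num) (by norm_num)
        (by have h := le_of_lt (show (0:ℝ) < 1/α by positivity); linarith)
    have e3 : ((1/2:ℝ)) ^ (-1:ℝ) = 2 := by
      rw [Real.rpow_neg_one]; norm_num
    linarith
  have hb0 : 0 ≤ (1 - x₀ ^ α) ^ (1/α - 1) := Real.rpow_nonneg (by linarith) _
  set p : ℝ := x₀ ^ (α - 1) * (1 - x₀ ^ α) ^ (1/α - 1) with hp
  have hprod : p ≤ 2 := by rw [hp]; nlinarith [ha0, ha1, hb0, hb2]
  have hprod0 : 0 ≤ p := by rw [hp]; positivity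
  have hpsq : (-p) ^ 2 ≤ 4 := by rw [neg_sq]; nlinarith [hprod, hprod0]
  have hpsq0 : 0 ≤ (-p) ^ 2 := sq_nonneg _
  set s := Real.sqrt (1 + (-p) ^ 2) with hs
  have hs1 : 1 ≤ s := by
    have h := Real.sqrt_le_sqrt (show (1:ℝ) ≤ 1 + (-p) ^ 2 by linarith)
    rwa [Real.sqrt_one] at h
  have hs3 : s ≤ 3 := by
    have h := Real.sqrt_le_sqrt (show (1 + (-p) ^ 2 : ℝ) ≤ 3 ^ 2 by nlinarith)
    rwa [Real.sqrt_sq (by norm_num : (0:ℝ) ≤ 3)] at h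
  have hts3 : t * s ≤ 3 * t := by nlinarith
  have htts : t ≤ t * s := by nlinarith
  -- f x₀ facts
  have hfx₀ge : 1 - x₀ ^ α ≤ (1 - x₀ ^ α) ^ (1/α) := lemA hα1.le hx₀α0.le (by linarith)
  have hfx₀le1 : (1 - x₀ ^ α) ^ (1/α) ≤ 1 :=
    Real.rpow_le_one (by linarith) (by linarith) (by positivity)
  simp only [abs_of_pos hxt, abs_of_pos hx₀] at hfeq
  -- show xt ≤ 1
  have hxt1 : xt ≤ 1 := by
    by_contra h
    push_neg at h
    have hxtα : 1 < xt ^ α := (Real.one_lt_rpow_iff_of_pos hxt).2 (Or.inl ⟨h, hα0⟩)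
    have hneg : 1 - xt ^ α < 0 := by linarith
    have hπ := Real.pi_pos
    have hlt : (1 - xt ^ α) ^ (1/α) < 0 := by
      rw [Real.rpow_def_of_neg hneg]
      apply mul_neg_of_pos_of_neg (Real.exp_pos _)
      apply Real.cos_neg_of_pi_div_two_lt_of_lt
      · have h1 : π / 2 * α < π := by nlinarith
        rw [show (1/α) * π = π / α by ring, lt_div_iff₀ hα0]
        linarith
      · have h1 : (1:ℝ)/α < 1 := by rw [div_lt_one hα0]; linarith
        nlinarith
    rw [hfeq] at hlt
    linarith
  have hxtα1 : xt ^ α ≤ 1 := Real.rpow_le_one hxt.le hxt1 hα0.le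
  have hxtα0 : 0 ≤ xt ^ α := Real.rpow_nonneg hxt.le _
  have hA : 1 - xt ^ α ≤ (1 - xt ^ α) ^ (1/α) := lemA hα1.le hxtα0 hxtα1
  have hB : (1 - xt ^ α) ^ (1/α) ≤ 1 - xt ^ α / α := lemB hα1.le hxtα0 hxtα1
  -- lower bound: t ≤ xt^α
  have htle : t ≤ xt ^ α := by
    rw [hfeq] at hA
    linarith
  -- upper bound: xt^α ≤ K*t
  have hup : xt ^ α ≤ K * t := by
    rw [hfeq] at hB
    have h1 : (1 - x₀ ^ α) ^ (1/α) - t * s ≤ 1 - xt ^ α / α := hB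
    have h2 : xt ^ α / α ≤ x₀ ^ α + 3 * t := by linarith
    have h3 : xt ^ α / α ≤ t / c₂ + 3 * t := by linarith
    have h4 : xt ^ α ≤ α * (t / c₂ + 3 * t) := by
      rw [div_le_iff₀ hα0] at h3; linarith [h3]
    calc xt ^ α ≤ α * (t / c₂ + 3 * t) := h4
      _ = K * t := by rw [hK]; field_simp
  have hpow : (xt ^ α) ^ (1/α) = xt := by
    rw [← Real.rpow_mul hxt.le, mul_one_div, div_self hα0.ne', Real.rpow_one]
  constructor
  · have l1 := Real.rpow_le_rpow ht0.le htle (by positivity : (0:ℝ) ≤ 1/α)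
    rw [hpow] at l1
    linarith [l1]
  · have u1 := Real.rpow_le_rpow hxtα0 hup (by positivity : (0:ℝ) ≤ 1/α)
    rw [hpow, Real.mul_rpow hK0.le ht0.le] at u1
    exact u1
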